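/- For any paging request sequence r and any h, k > 0, the cost of an optimal offline paging strategy with h servers (cache size h) on r is at least (k - h + m(k,r)) · L(k,r) / 2, where L(k,r) is the number of k-phases minus 1 and m(k,r) is the average number of new requests per k-phase. -/

import Mathlib

/-- Length of the maximal prefix of `r` containing at most `k` distinct items. -/
def maxPrefixLen {α : Type*} [DecidableEq α] (k : ℕ) (r : List α) : ℕ :=
  ((List.range (r.length + 1)).filter (fun n => (r.take n).dedup.length ≤ k)).foldr max 0

/-- Greedy phase partition, with fuel for termination. -/
def phasesAux {α : Type*} [DecidableEq α] (k : ℕ) : ℕ → List α → List (List α)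
  | 0, _ => []
  | _, [] => []
  | (fuel+1), r =>
      let n := max 1 (maxPrefixLen k r)
      r.take n :: phasesAux k fuel (r.drop n)

/-- The `k`-phase partition of `r`: greedy maximal consecutive blocks, each
containing requests to at most `k` distinct items. -/
def phases {α : Type*} [DecidableEq α] (k : ℕ) (r : List α) : List (List α) :=
  phasesAux k r.length r

/-- `L(k,r)`: the number of `k`-phases of `r`, minus 1. -/
def numPhases {α : Type*} [DecidableEq α] (k : ℕ) (r : List α) : ℕ :=
  (phases k r).length - 1

/-- For each `k`-phase other than the first, the number of new requests:
items requested in the phase but not in the previous phase. -/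
def newCounts {α : Type*} [DecidableEq α] (k : ℕ) (r : List α) : List ℕ :=
  ((phases k r).zip (phases k r).tail).map
    (fun p => (p.2.dedup.filter (fun x => x ∉ p.1)).length)

/-- `m(k,r)`: the average number of new requests per `k`-phase (other than the first). -/
noncomputable def avgNew {α : Type*} [DecidableEq α] (k : ℕ) (r : List α) : ℝ :=
  ((newCounts k r).sum : ℝ) / (numPhases k r : ℝ)

/-- Index in `r` at which the `i`-th `k`-phase starts. -/
def phaseStart {α : Type*} [DecidableEq α] (k : ℕ) (r : List α) (i : ℕ) : ℕ :=
  (((phases k r).take i).map List.length).sum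

/-- An execution of a paging strategy with `h` servers (cache slots) on request
sequence `r`.  `cache i` is the set of items with a server just before request `i`
is served; the cache starts empty, never exceeds `h` items, contains each
requested item right after it is served, and only requested items may enter. -/
structure PagingSchedule {α : Type*} [DecidableEq α] (h : ℕ) (r : List α) where
  cache : ℕ → Finset α
  init : cache 0 = ∅
  card_le : ∀ i, (cache i).card ≤ h
  serves : ∀ i : Fin r.length, r.get i ∈ cache (i.val + 1)
  update : ∀ i : Fin r.length, cache (i.val + 1) ⊆ cache i.val ∪ {r.get i}

/-- Number of faults: requests to items not currently in the cache. -/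
def faults {α : Type*} [DecidableEq α] {h : ℕ} {r : List α} (s : PagingSchedule h r) : ℕ :=
  (Finset.univ.filter (fun i : Fin r.length => r.get i ∉ s.cache i.val)).card

/-- Cost of a schedule: each server's first placement is free, so the number of
(paid) server movements is the number of faults minus `h`. -/
def schedCost {α : Type*} [DecidableEq α] {h : ℕ} {r : List α} (s : PagingSchedule h r) : ℕ :=
  faults s - h

/-- Optimal offline paging cost with `h` servers on `r`. -/
noncomputable def costOpt {α : Type*} [DecidableEq α] (h : ℕ) (r : List α) : ℕ :=
  sInf {c | ∃ s : PagingSchedule h r, c = schedCost s}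

/-- Number of faults incurred at requests with index in `[a, b)`. -/
def windowFaults {α : Type*} [DecidableEq α] {h : ℕ} {r : List α}
    (s : PagingSchedule h r) (a b : ℕ) : ℕ :=
  (Finset.univ.filter
    (fun i : Fin r.length => a ≤ i.val ∧ i.val < b ∧ r.get i ∉ s.cache i.val)).card

/-- A schedule is conservative if it faults at most `h` times during any
consecutive subsequence of requests to at most `h` distinct items. -/
def Conservative {α : Type*} [DecidableEq α] {h : ℕ} {r : List α}
    (s : PagingSchedule h r) : Prop :=
  ∀ a b : ℕ, ((r.drop a).take (b - a)).dedup.length ≤ h → windowFaults s a b ≤ h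


section Aux
variable {α : Type*} [DecidableEq α]

lemma dedup_length_le_of_toFinset_subset (l l' : List α) (hsub : l.toFinset ⊆ l'.toFinset) :
    l.dedup.length ≤ l'.dedup.length := by
  rw [← List.card_toFinset, ← List.card_toFinset]
  exact Finset.card_le_card hsub

lemma cache_back {h : ℕ} {r : List α} (s : PagingSchedule h r) (x : α) (a : ℕ) :
    ∀ i, a ≤ i → i ≤ r.length → x ∈ s.cache i →
    (∀ t (ht : t < r.length), a ≤ t → t < i → r.get ⟨t, ht⟩ ≠ x) → x ∈ s.cache a := by
  intro i
  induction i with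
  | zero => intro hai _ hx _; interval_cases a; exact hx
  | succ i ih =>
    intro hai hil hx hne
    rcases Nat.lt_or_ge a (i+1) with hlt | hge
    · have hia : a ≤ i := Nat.lt_succ_iff.mp hlt
      have hir : i < r.length := hil
      have hx' : x ∈ s.cache i := by
        rcases Finset.mem_union.mp (s.update ⟨i, hir⟩ hx) with h1 | h1
        · exact h1
        · exact absurd (Finset.mem_singleton.mp h1).symm
            (hne i hir hia (Nat.lt_succ_self i))
      exact ih hia (by omega) hx' (fun t ht h1 h2 => hne t ht h1 (by omega))
    · have : a = i + 1 := le_antisymm hai hge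
      subst this; exact hx

lemma window_count {h : ℕ} {r : List α} (s : PagingSchedule h r) (a b : ℕ) :
    ((r.drop a).take (b - a)).dedup.length ≤ windowFaults s a b + (s.cache a).card := by
  classical
  set W := (r.drop a).take (b - a) with hW
  have hsub : W.toFinset ⊆
      ((Finset.univ.filter
        (fun i : Fin r.length => a ≤ i.val ∧ i.val < b ∧ r.get i ∉ s.cache i.val)).image
        (fun i => r.get i)) ∪ s.cache a := by
    intro x hx
    rw [List.mem_toFinset] at hx
    obtain ⟨n, hn, hxn⟩ := List.getElem_of_mem hx
    have hblen : W.length = min (b - a) (r.length - a) := by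
      simp [hW]
    have hnlt : n < min (b - a) (r.length - a) := hblen ▸ hn
    have hna : a + n < r.length := by omega
    have hnb : a + n < b := by omega
    have hvaln : r[a + n] = x := by
      rw [← hxn]; simp [hW, List.getElem_take, List.getElem_drop]
    have hQ : ∃ i, a ≤ i ∧ i < b ∧ i < r.length ∧ r.getD i x = x :=
      ⟨a + n, by omega, hnb, hna, by rw [List.getD_eq_getElem r x hna, hvaln]⟩
    set i0 := Nat.find hQ with hi0
    obtain ⟨hi0a, hi0b, hi0l, hi0x⟩ := Nat.find_spec hQ
    have hval : r.get ⟨i0, hi0l⟩ = x := by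
      rw [List.get_eq_getElem, ← List.getD_eq_getElem r x hi0l, hi0x]
    by_cases hc : r.get ⟨i0, hi0l⟩ ∈ s.cache i0
    · refine Finset.mem_union_right _ ?_
      refine cache_back s x a i0 hi0a (le_of_lt hi0l) (hval ▸ hc) ?_
      intro t ht h1 h2 hcon
      have := Nat.find_min hQ (m := t) h2
      exact this ⟨h1, by omega, ht, by rw [List.getD_eq_getElem r x ht]; exact hcon⟩
    · refine Finset.mem_union_left _ ?_
      refine Finset.mem_image.mpr ⟨⟨i0, hi0l⟩, ?_, hval⟩
      simp only [Finset.mem_filter, Finset.mem_univ, true_and]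
      exact ⟨hi0a, hi0b, hc⟩
  calc W.dedup.length = W.toFinset.card := (List.card_toFinset W).symm
    _ ≤ _ := Finset.card_le_card hsub
    _ ≤ _ := Finset.card_union_le _ _
    _ ≤ windowFaults s a b + (s.cache a).card := by
        rw [windowFaults]
        exact Nat.add_le_add_right (Finset.card_image_le) _

lemma windowFaults_le_faults {h : ℕ} {r : List α} (s : PagingSchedule h r) (a b : ℕ) :
    windowFaults s a b ≤ faults s := by
  apply Finset.card_le_card
  intro i hi
  simp only [Finset.mem_filter, Finset.mem_univ, true_and] at hi ⊢
  exact hi.2.2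

lemma sum_windowFaults_le {h : ℕ} {r : List α} (s : PagingSchedule h r) (L : ℕ)
    (A B : ℕ → ℕ) (hA : Monotone A) (hAB : ∀ j, B j ≤ A (j + 2)) :
    ∑ j ∈ Finset.range L, windowFaults s (A j) (B j) ≤ 2 * faults s := by
  classical
  have hwf : ∀ j, windowFaults s (A j) (B j) =
      ∑ i : Fin r.length,
        if A j ≤ i.val ∧ i.val < B j ∧ r.get i ∉ s.cache i.val then 1 else 0 := by
    intro j; rw [windowFaults, Finset.card_filter]
  rw [Finset.sum_congr rfl (fun j _ => hwf j), Finset.sum_comm]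
  have hfa : faults s = ∑ i : Fin r.length, if r.get i ∉ s.cache i.val then 1 else 0 := by
    rw [faults, Finset.card_filter]
  rw [hfa, Finset.mul_sum]
  refine Finset.sum_le_sum (fun i _ => ?_)
  by_cases hf : r.get i ∉ s.cache i.val
  · have hcong : ∀ j ∈ Finset.range L,
        (if A j ≤ i.val ∧ i.val < B j ∧ r.get i ∉ s.cache i.val then 1 else 0)
          = (if A j ≤ i.val ∧ i.val < B j then 1 else 0) := by
      intro j _
      exact if_congr ⟨fun ⟨x, y, _⟩ => ⟨x, y⟩, fun ⟨x, y⟩ => ⟨x, y, hf⟩⟩ rfl rfl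
    rw [Finset.sum_congr rfl hcong, if_pos hf, mul_one, ← Finset.card_filter]
    set T := Finset.filter (fun j => A j ≤ i.val ∧ i.val < B j) (Finset.range L) with hT
    rcases T.eq_empty_or_nonempty with he | hne
    · rw [he]; simp
    · set j0 := T.min' hne with hj0def
      have hj0 := T.min'_mem hne
      have hsub2 : T ⊆ {j0, j0 + 1} := by
        intro j hj
        have h1 : j0 ≤ j := T.min'_le j hj
        have hj0spec : A j0 ≤ i.val ∧ i.val < B j0 := (Finset.mem_filter.mp hj0).2
        have hjspec : A j ≤ i.val ∧ i.val < B j := (Finset.mem_filter.mp hj).2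
        have h2 : j ≤ j0 + 1 := by
          by_contra hcon
          have hm : A (j0 + 2) ≤ A j := hA (by omega)
          have := le_trans (hAB j0) hm
          omega
        simp only [Finset.mem_insert, Finset.mem_singleton]
        omega
      calc T.card ≤ ({j0, j0 + 1} : Finset ℕ).card := Finset.card_le_card hsub2
        _ ≤ 2 := by
            apply le_trans (Finset.card_insert_le _ _)
            simp
  · simp only [not_not, List.get_eq_getElem] at hf
    simp [hf]

end Aux

section Phases
variable {α : Type*} [DecidableEq α]

lemma foldr_max_le (l : List ℕ) (m : ℕ) (hm : ∀ x ∈ l, x ≤ m) : l.foldr max 0 ≤ m := by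
  induction l with
  | nil => simp
  | cons a t ih =>
    simp only [List.foldr_cons]
    exact max_le (hm a (by simp)) (ih (fun x hx => hm x (by simp [hx])))

lemma le_foldr_max (l : List ℕ) (x : ℕ) (hx : x ∈ l) : x ≤ l.foldr max 0 := by
  induction l with
  | nil => simp at hx
  | cons a t ih =>
    simp only [List.foldr_cons]
    rcases List.mem_cons.mp hx with rfl | hx'
    · exact le_max_left _ _
    · exact le_trans (ih hx') (le_max_right _ _)

lemma foldr_max_mem (l : List ℕ) : l.foldr max 0 = 0 ∨ l.foldr max 0 ∈ l := by
  induction l with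
  | nil => simp
  | cons a t ih =>
    simp only [List.foldr_cons]
    rcases le_total a (t.foldr max 0) with hle | hle
    · rw [max_eq_right hle]
      rcases ih with h0 | hmem
      · exact Or.inl h0
      · exact Or.inr (by simp [hmem])
    · rw [max_eq_left hle]
      exact Or.inr (by simp)

lemma maxPrefixLen_le_length (k : ℕ) (r : List α) : maxPrefixLen k r ≤ r.length := by
  apply foldr_max_le
  intro x hx
  have := List.mem_range.mp (List.mem_filter.mp hx).1
  omega

lemma le_maxPrefixLen {k n : ℕ} {r : List α} (hn : n ≤ r.length)
    (hd : (r.take n).dedup.length ≤ k) : n ≤ maxPrefixLen k r := by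
  apply le_foldr_max
  rw [List.mem_filter]
  exact ⟨List.mem_range.mpr (by omega), by simpa using hd⟩

lemma maxPrefixLen_dedup_le (k : ℕ) (r : List α) :
    (r.take (maxPrefixLen k r)).dedup.length ≤ k := by
  rcases foldr_max_mem ((List.range (r.length + 1)).filter
      (fun n => decide ((r.take n).dedup.length ≤ k))) with h0 | hmem
  · rw [maxPrefixLen, h0]; simp
  · have := (List.mem_filter.mp hmem).2
    rw [maxPrefixLen]
    simpa using this

lemma one_le_maxPrefixLen {k : ℕ} (hk : 0 < k) {r : List α} (hne : r ≠ []) :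
    1 ≤ maxPrefixLen k r := by
  apply le_maxPrefixLen (n := 1)
  · cases r with
    | nil => simp at hne
    | cons a t => simp
  · cases r with
    | nil => simp at hne
    | cons a t => simpa using Nat.one_le_iff_ne_zero.mpr hk.ne'

lemma dedup_take_succ_le (r : List α) (n : ℕ) :
    (r.take (n + 1)).dedup.length ≤ (r.take n).dedup.length + 1 := by
  rw [← List.card_toFinset, ← List.card_toFinset, List.take_succ]
  cases h : r[n]? with
  | none => simp
  | some x =>
    rw [List.toFinset_append]
    calc ((r.take n).toFinset ∪ [x].toFinset).card
        ≤ (r.take n).toFinset.card + [x].toFinset.card := Finset.card_union_le _ _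
      _ ≤ (r.take n).toFinset.card + 1 := by simp

lemma take_maxPrefixLen_dedup_eq {k : ℕ} (hk : 0 < k) (r : List α)
    (hlt : maxPrefixLen k r < r.length) :
    (r.take (maxPrefixLen k r)).dedup.length = k := by
  have h1 := maxPrefixLen_dedup_le k r
  have h2 : k < (r.take (maxPrefixLen k r + 1)).dedup.length := by
    by_contra hcon
    push_neg at hcon
    have := le_maxPrefixLen (by omega) hcon
    omega
  have h3 := dedup_take_succ_le r (maxPrefixLen k r)
  omega

lemma phasesAux_nil (k fuel : ℕ) : phasesAux k fuel ([] : List α) = [] := by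
  cases fuel <;> simp [phasesAux]

lemma phasesAux_cons (k fuel : ℕ) (a : α) (t : List α) :
    phasesAux k (fuel + 1) (a :: t) =
      (a :: t).take (max 1 (maxPrefixLen k (a :: t))) ::
        phasesAux k fuel ((a :: t).drop (max 1 (maxPrefixLen k (a :: t)))) := rfl

lemma phasesAux_join (k : ℕ) : ∀ (fuel : ℕ) (r : List α), r.length ≤ fuel →
    (phasesAux k fuel r).flatten = r := by
  intro fuel
  induction fuel with
  | zero =>
    intro r hr
    have : r = [] := List.length_eq_zero_iff.mp (by omega)
    subst this
    simp [phasesAux]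
  | succ fuel ih =>
    intro r hr
    cases r with
    | nil => simp [phasesAux]
    | cons a t =>
      rw [phasesAux_cons]
      simp only [List.flatten_cons]
      rw [ih _ (by simp only [List.length_drop]; simp at hr ⊢; omega)]
      exact List.take_append_drop _ _

lemma phasesAux_pairs {k : ℕ} (hk : 0 < k) : ∀ (fuel : ℕ) (r : List α), r.length ≤ fuel →
    ∀ pq ∈ (phasesAux k fuel r).zip (phasesAux k fuel r).tail, pq.1.dedup.length = k := by
  intro fuel
  induction fuel with
  | zero =>
    intro r hr pq hpq
    have : r = [] := List.length_eq_zero_iff.mp (by omega)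
    subst this
    simp [phasesAux] at hpq
  | succ fuel ih =>
    intro r hr pq hpq
    cases r with
    | nil => simp [phasesAux] at hpq
    | cons a t =>
      rw [phasesAux_cons] at hpq
      set r0 := a :: t with hr0
      set n := max 1 (maxPrefixLen k r0) with hn
      cases hP'e : phasesAux k fuel (r0.drop n) with
      | nil => rw [hP'e] at hpq; simp at hpq
      | cons q Q =>
        rw [hP'e] at hpq
        simp only [List.tail_cons, List.zip_cons_cons, List.mem_cons] at hpq
        rcases hpq with heq | hmem
        · -- first pair: (r0.take n, q)
          have hdrop_ne : r0.drop n ≠ [] := by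
            intro hcon
            rw [hcon, phasesAux_nil] at hP'e
            exact List.cons_ne_nil q Q hP'e.symm
          have hnlen : n < r0.length := by
            by_contra hcon
            push_neg at hcon
            exact hdrop_ne (List.drop_eq_nil_of_le hcon)
          have hmx : n = maxPrefixLen k r0 :=
            max_eq_right (one_le_maxPrefixLen hk (by simp [hr0]))
          rw [heq]
          simp only
          rw [hmx]
          exact take_maxPrefixLen_dedup_eq hk r0 (hmx ▸ hnlen)
        · -- later pairs
          have hlen : (r0.drop n).length ≤ fuel := by
            have h1 : 1 ≤ n := le_max_left _ _
            rw [List.length_drop]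
            simp only [hr0, List.length_cons] at hr ⊢
            omega
          have := ih (r0.drop n) hlen pq
          rw [hP'e] at this
          exact this (by simpa using hmem)

lemma phases_join (k : ℕ) (r : List α) : (phases k r).flatten = r :=
  phasesAux_join k r.length r le_rfl

lemma phases_pairs {k : ℕ} (hk : 0 < k) (r : List α) :
    ∀ pq ∈ (phases k r).zip (phases k r).tail, pq.1.dedup.length = k :=
  phasesAux_pairs hk r.length r le_rfl

end Phases

section Seg
variable {α : Type*} [DecidableEq α]

lemma phaseStart_eq (k : ℕ) (r : List α) (j : ℕ) :
    phaseStart k r j = ∑ t ∈ Finset.range j, ((phases k r).getD t []).length := by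
  induction j with
  | zero => simp [phaseStart]
  | succ j ih =>
    rw [phaseStart, List.take_succ, List.map_append, List.sum_append, ← phaseStart, ih,
      Finset.sum_range_succ]
    congr 1
    cases h : (phases k r)[j]? with
    | none => simp [List.getD, h]
    | some p => simp [List.getD, h]

lemma phaseStart_mono (k : ℕ) (r : List α) : Monotone (phaseStart k r) := by
  intro a b hab
  rw [phaseStart_eq, phaseStart_eq]
  exact Finset.sum_le_sum_of_subset (Finset.range_subset_range.mpr hab)

lemma phaseStart_succ (k : ℕ) (r : List α) (j : ℕ) (hj : j < (phases k r).length) :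
    phaseStart k r (j + 1) = phaseStart k r j + (phases k r)[j].length := by
  rw [phaseStart_eq, phaseStart_eq, Finset.sum_range_succ, List.getD_eq_getElem _ _ hj]

lemma join_drop_aux (A B : List (List α)) :
    (A ++ B).flatten.drop ((A.map List.length).sum) = B.flatten := by
  rw [List.flatten_append, ← List.length_flatten, List.drop_left]

lemma drop_phaseStart (k : ℕ) (r : List α) (j : ℕ) :
    r.drop (phaseStart k r j) = ((phases k r).drop j).flatten := by
  have h := join_drop_aux ((phases k r).take j) ((phases k r).drop j)
  rw [List.take_append_drop, phases_join] at h
  exact h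

lemma segment_eq (k : ℕ) (r : List α) (j : ℕ) (hj : j + 1 < (phases k r).length) :
    (r.drop (phaseStart k r j)).take (phaseStart k r (j + 2) - phaseStart k r j) =
      (phases k r)[j] ++ (phases k r)[j + 1] := by
  have hj0 : j < (phases k r).length := by omega
  have hs2 : phaseStart k r (j + 2) =
      phaseStart k r j + ((phases k r)[j].length + (phases k r)[j + 1].length) := by
    rw [phaseStart_succ k r (j + 1) hj, phaseStart_succ k r j hj0]
    omega
  have hdrop : r.drop (phaseStart k r j) =
      ((phases k r)[j] ++ (phases k r)[j + 1]) ++ ((phases k r).drop (j + 2)).flatten := by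
    rw [drop_phaseStart, List.drop_eq_getElem_cons hj0, List.drop_eq_getElem_cons hj,
      List.flatten_cons, List.flatten_cons, List.append_assoc]
  rw [hdrop, hs2]
  simp only [Nat.add_sub_cancel_left]
  rw [← List.length_append, List.take_left]

lemma dedup_append_count (p q : List α) :
    (p ++ q).dedup.length = p.dedup.length + (q.dedup.filter (fun x => x ∉ p)).length := by
  classical
  rw [← List.card_toFinset, ← List.card_toFinset, List.toFinset_append]
  have hnd : (q.dedup.filter (fun x => x ∉ p)).Nodup := q.nodup_dedup.filter _
  have h1 : (q.dedup.filter (fun x => x ∉ p)).length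
      = (q.dedup.filter (fun x => x ∉ p)).toFinset.card :=
    (List.toFinset_card_of_nodup hnd).symm
  have h2 : (q.dedup.filter (fun x => x ∉ p)).toFinset = q.toFinset \ p.toFinset := by
    ext x
    simp only [List.mem_toFinset, List.mem_filter, List.mem_dedup, Finset.mem_sdiff,
      decide_not, Bool.not_eq_true', decide_eq_false_iff_not]
  rw [h1, h2]
  have := Finset.card_sdiff_add_card q.toFinset p.toFinset
  rw [Finset.union_comm] at this
  omega

lemma cast_sub_le' (m n : ℕ) : (m : ℝ) - n ≤ ((m - n : ℕ) : ℝ) := by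
  rcases le_total n m with hx | hx
  · rw [Nat.cast_sub hx]
  · have h0 : m - n = 0 := Nat.sub_eq_zero_of_le hx
    rw [h0]
    have : (m : ℝ) ≤ n := by exact_mod_cast hx
    simp
    linarith

lemma list_sum_cast (c : List ℕ) :
    (c.sum : ℝ) = ∑ j ∈ Finset.range c.length, (c.getD j 0 : ℝ) := by
  induction c with
  | nil => simp
  | cons a t ih => simp [Finset.sum_range_succ', ih, add_comm]

end Seg

section Master
variable {α : Type*} [DecidableEq α]

lemma newCounts_length (k : ℕ) (r : List α) : (newCounts k r).length = numPhases k r := by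
  rw [newCounts, numPhases, List.length_map, List.length_zip, List.length_tail]
  omega

lemma key_ident {k : ℕ} (hk : 0 < k) (r : List α) (j : ℕ) (hj : j < numPhases k r) :
    ((r.drop (phaseStart k r j)).take (phaseStart k r (j + 2) - phaseStart k r j)).dedup.length
      = k + (newCounts k r).getD j 0 := by
  have hP1 : j + 1 < (phases k r).length := by
    rw [numPhases] at hj; omega
  have hP0 : j < (phases k r).length := by omega
  have htl : j < (phases k r).tail.length := by rw [List.length_tail]; omega
  have hzlen : j < ((phases k r).zip (phases k r).tail).length := by
    rw [List.length_zip, List.length_tail]; omega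
  have hmem : ((phases k r)[j], (phases k r)[j + 1]) ∈ (phases k r).zip (phases k r).tail := by
    have h1 : ((phases k r).zip (phases k r).tail)[j] = ((phases k r)[j], (phases k r).tail[j]) :=
      List.getElem_zip
    have h2 : (phases k r).tail[j] = (phases k r)[j + 1] := by rw [List.getElem_tail]
    rw [h2] at h1
    exact h1 ▸ List.getElem_mem hzlen
  have hk1 : (phases k r)[j].dedup.length = k := phases_pairs hk r _ hmem
  have hcl : j < (newCounts k r).length := by rw [newCounts_length]; exact hj
  have hcd : (newCounts k r).getD j 0
      = ((phases k r)[j + 1].dedup.filter (fun x => x ∉ (phases k r)[j])).length := by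
    rw [List.getD_eq_getElem _ _ hcl]
    simp only [newCounts, List.getElem_map, List.getElem_zip, List.getElem_tail]
  rw [segment_eq k r j hP1, dedup_append_count, hk1, hcd]

lemma prefix_bound {h k : ℕ} (hk : 0 < k) {r : List α} (s : PagingSchedule h r)
    (j : ℕ) (hj : j < numPhases k r) :
    k + (newCounts k r).getD j 0 ≤ windowFaults s 0 (phaseStart k r (j + 2)) := by
  have hkey := key_ident hk r j hj
  have hmono : phaseStart k r j ≤ phaseStart k r (j + 2) := phaseStart_mono k r (by omega)
  have htake : k + (newCounts k r).getD j 0 ≤ (r.take (phaseStart k r (j + 2))).dedup.length := by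
    rw [← hkey]
    apply dedup_length_le_of_toFinset_subset
    intro x hx
    rw [List.mem_toFinset] at hx ⊢
    have hsplit : r.take (phaseStart k r (j + 2)) =
        r.take (phaseStart k r j) ++
          (r.drop (phaseStart k r j)).take (phaseStart k r (j + 2) - phaseStart k r j) := by
      rw [← List.take_add]
      congr 1
      omega
    rw [hsplit]
    exact List.mem_append_right _ hx
  have hwin := window_count s 0 (phaseStart k r (j + 2))
  rw [s.init] at hwin
  simp only [List.drop_zero, Nat.sub_zero, Finset.card_empty, Nat.add_zero] at hwin
  omega

lemma master {h k : ℕ} (hk : 0 < k) (r : List α) (s : PagingSchedule h r) :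
    ((k : ℝ) - (h : ℝ) + avgNew k r) * (numPhases k r : ℝ) / 2 ≤ (schedCost s : ℝ) := by
  classical
  set L := numPhases k r with hL
  set c := newCounts k r with hc
  have hclen : c.length = L := newCounts_length k r
  have hcost0 : (0 : ℝ) ≤ (schedCost s : ℝ) := Nat.cast_nonneg _
  have hcost1 : (faults s : ℝ) - h ≤ (schedCost s : ℝ) := by
    have he : schedCost s = faults s - h := rfl
    rw [he]
    exact cast_sub_le' _ _
  have F1 : ∀ j, j < L → k + c.getD j 0 ≤ faults s := by
    intro j hj
    have hpb := prefix_bound hk s j hj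
    rw [← hc] at hpb
    have h2 := windowFaults_le_faults s 0 (phaseStart k r (j + 2))
    omega
  have F2 : 2 ≤ L → (∑ j ∈ Finset.range L, ((k : ℝ) + c.getD j 0 - h)) + 2 * h
      ≤ 2 * (faults s : ℝ) := by
    intro hL2
    set A : ℕ → ℕ := fun j => if j < 2 then 0 else phaseStart k r j with hA
    set B : ℕ → ℕ := fun j => phaseStart k r (j + 2) with hB
    have hAmono : Monotone A := by
      intro x y hxy
      by_cases hx : x < 2
      · by_cases hy : y < 2
        · simp [hA, (by omega : x ≤ 1), (by omega : y ≤ 1)]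
        · simp [hA, (by omega : x ≤ 1), (by omega : ¬ y ≤ 1)]
      · have hy : ¬ y < 2 := by omega
        simp only [hA, hx, hy, if_false]
        exact phaseStart_mono k r hxy
    have hABle : ∀ j, B j ≤ A (j + 2) := by
      intro j
      simp [hA, hB]
    have hper : ∀ j ∈ Finset.range L, (k : ℝ) + c.getD j 0
        ≤ (windowFaults s (A j) (B j) : ℝ) + (if j < 2 then 0 else (h : ℝ)) := by
      intro j hjr
      have hj : j < L := Finset.mem_range.mp hjr
      by_cases hj2 : j < 2
      · have hpb := prefix_bound hk s j hj
        simp only [hA, hB, hj2, if_true]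
        have hcast : (k : ℝ) + c.getD j 0 ≤ (windowFaults s 0 (phaseStart k r (j + 2)) : ℝ) := by
          exact_mod_cast hpb
        linarith
      · have hkey := key_ident hk r j hj
        rw [← hc] at hkey
        have hwin := window_count s (phaseStart k r j) (phaseStart k r (j + 2))
        rw [hkey] at hwin
        have hcard := s.card_le (phaseStart k r j)
        have hnat : k + c.getD j 0
            ≤ windowFaults s (phaseStart k r j) (phaseStart k r (j + 2)) + h := by omega
        simp only [hA, hB, hj2, if_false]
        exact_mod_cast hnat
    have hwsum : (∑ j ∈ Finset.range L, (windowFaults s (A j) (B j) : ℝ))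
        ≤ 2 * (faults s : ℝ) := by
      exact_mod_cast sum_windowFaults_le s L A B hAmono hABle
    have hfilter : Finset.filter (fun j => j < 2) (Finset.range L) = Finset.range 2 := by
      ext x
      simp only [Finset.mem_filter, Finset.mem_range]
      omega
    have hite : ∑ j ∈ Finset.range L, (if j < 2 then (0 : ℝ) else h)
        = L * h - 2 * h := by
      have hpt : ∀ j ∈ Finset.range L,
          (if j < 2 then (0 : ℝ) else h) = h - (if j < 2 then (h : ℝ) else 0) := by
        intro j _
        by_cases hj : j < 2 <;> simp [hj]
      rw [Finset.sum_congr rfl hpt, Finset.sum_sub_distrib, Finset.sum_const, Finset.card_range,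
        ← Finset.sum_filter, hfilter, Finset.sum_const, Finset.card_range]
      push_cast
      ring
    have h1 : ∑ j ∈ Finset.range L, ((k : ℝ) + c.getD j 0) ≤
        (∑ j ∈ Finset.range L, (windowFaults s (A j) (B j) : ℝ)) + (L * h - 2 * h) :=
      calc ∑ j ∈ Finset.range L, ((k : ℝ) + c.getD j 0)
          ≤ ∑ j ∈ Finset.range L,
              ((windowFaults s (A j) (B j) : ℝ) + (if j < 2 then 0 else (h : ℝ))) :=
            Finset.sum_le_sum hper
        _ = _ := by rw [Finset.sum_add_distrib, hite]
    have hexp : ∑ j ∈ Finset.range L, ((k : ℝ) + c.getD j 0 - h)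
        = (∑ j ∈ Finset.range L, ((k : ℝ) + c.getD j 0)) - L * h := by
      rw [Finset.sum_sub_distrib, Finset.sum_const, Finset.card_range, nsmul_eq_mul]
    linarith
  rcases Nat.eq_zero_or_pos L with hL0 | hL1
  · rw [hL0]
    norm_num
  · have hLne : (L : ℝ) ≠ 0 := Nat.cast_ne_zero.mpr (by omega)
    have havg : avgNew k r = (c.sum : ℝ) / (L : ℝ) := rfl
    have e1 : ((k : ℝ) - h + avgNew k r) * L = ((k : ℝ) - h) * L + (c.sum : ℝ) := by
      rw [havg]
      field_simp
    have e2 : ((k : ℝ) - h) * L + (c.sum : ℝ)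
        = ∑ j ∈ Finset.range L, ((k : ℝ) + c.getD j 0 - h) := by
      rw [list_sum_cast, hclen, Finset.sum_sub_distrib, Finset.sum_add_distrib,
        Finset.sum_const, Finset.sum_const, Finset.card_range, nsmul_eq_mul, nsmul_eq_mul]
      ring
    rcases Nat.lt_or_ge L 2 with hLlt | hL2
    · have hLeq : L = 1 := by omega
      have hsum1 : ∑ j ∈ Finset.range L, ((k : ℝ) + c.getD j 0 - h)
          = (k : ℝ) + c.getD 0 0 - h := by
        rw [hLeq, Finset.sum_range_one]
      rcases le_or_gt ((k : ℝ) + c.getD 0 0 - h) 0 with hneg | hpos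
      · calc ((k : ℝ) - h + avgNew k r) * L / 2
            = ((k : ℝ) + c.getD 0 0 - h) / 2 := by rw [e1, e2, hsum1]
          _ ≤ 0 := by linarith
          _ ≤ _ := hcost0
      · have hfc : (k : ℝ) + c.getD 0 0 ≤ (faults s : ℝ) := by
          exact_mod_cast F1 0 (by omega)
        calc ((k : ℝ) - h + avgNew k r) * L / 2
            = ((k : ℝ) + c.getD 0 0 - h) / 2 := by rw [e1, e2, hsum1]
          _ ≤ (k : ℝ) + c.getD 0 0 - h := half_le_self (le_of_lt hpos)
          _ ≤ (faults s : ℝ) - h := by linarith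
          _ ≤ _ := hcost1
    · have hF2 := F2 hL2
      rw [div_le_iff₀ (by norm_num : (0 : ℝ) < 2), e1, e2]
      linarith

end Master

/-- the optimal offline paging cost with `h` servers is at least
`(k - h + m(k,r)) · L(k,r) / 2`. -/
theorem costOpt_lower_bound {α : Type*} [DecidableEq α] (r : List α) (h k : ℕ)
    (hh : 0 < h) (hk : 0 < k) :
    ((k : ℝ) - (h : ℝ) + avgNew k r) * (numPhases k r : ℝ) / 2 ≤ (costOpt h r : ℝ) := by
  classical
  have s0 : PagingSchedule h r :=
    { cache := fun i => if hi : i - 1 < r.length ∧ 0 < i then {r.get ⟨i - 1, hi.1⟩} else ∅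
      init := by simp
      card_le := by
        intro i
        by_cases hi : i - 1 < r.length ∧ 0 < i
        · simp only [hi, dif_pos]
          simpa using Nat.one_le_iff_ne_zero.mpr hh.ne'
        · simp only [hi, dif_neg, not_false_iff]
          simp
      serves := by
        intro i
        have hi : i.val + 1 - 1 < r.length ∧ 0 < i.val + 1 := ⟨by simpa using i.isLt, by omega⟩
        simp only [hi, dif_pos]
        simp
      update := by
        intro i x hx
        have hi : i.val + 1 - 1 < r.length ∧ 0 < i.val + 1 := ⟨by simpa using i.isLt, by omega⟩
        rw [dif_pos hi] at hx
        have hfin : (⟨i.val + 1 - 1, hi.1⟩ : Fin r.length) = i := by apply Fin.ext; simp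
        rw [hfin] at hx
        rw [Finset.mem_singleton] at hx
        subst hx
        exact Finset.mem_union_right _ (Finset.mem_singleton_self _) }
  have hmem : costOpt h r ∈ {c | ∃ s : PagingSchedule h r, c = schedCost s} :=
    Nat.sInf_mem ⟨schedCost s0, s0, rfl⟩
  obtain ⟨s, hs⟩ := hmem
  rw [hs]
  exact master hk r s
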